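/- arXiv:2501.00259 — 2 statements merged into one kernel-verified Lean document; each statement's English description precedes it below -/
import Mathlib

section
/- Let G be a Hausdorff locally profinite topological group admitting a neighborhood basis of the identity consisting of profinite open subgroups, let ℓ be a prime, and let g ∈ G be an element such that the sequence g^(ℓ^k) converges to the identity as k → ∞. Then the homomorphism ℤ → G sending 1 to g extends to a continuous group homomorphism from the profinite completion ẑ = ∏_ℓ ℤ_ℓ to G. -/
open Filter Topology

/-- For each prime `q`, `q.1` is prime. -/
instance (q : Nat.Primes) : Fact (Nat.Prime q.1) := ⟨q.2⟩

/-- The profinite completion `ẑ = ∏_ℓ ℤ_ℓ` of `ℤ`. -/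
abbrev ZHat : Type := (q : Nat.Primes) → ℤ_[q.1]

/-- The canonical embedding `ℤ → ẑ`. -/
noncomputable def zhatInt (n : ℤ) : ZHat := fun q => (n : ℤ_[q.1])

/-- The homomorphism `ℤ → G`, `1 ↦ g`, extends to a continuous group homomorphism
`ẑ → G`. -/
def ExtendsToZHat {G : Type*} [Group G] [TopologicalSpace G] (g : G) : Prop :=
  ∃ F : ZHat → G, Continuous F ∧ (∀ x y : ZHat, F (x + y) = F x * F y) ∧
    ∀ n : ℤ, F (zhatInt n) = g ^ n

/- Auxiliary lemmas -/

lemma aux_int_dvd_of_span {p : ℕ} [Fact p.Prime] {N : ℕ} {z : ℤ}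
    (h : ((z : ℤ_[p])) ∈ Ideal.span {(p : ℤ_[p]) ^ N}) : (p : ℤ) ^ N ∣ z := by
  rw [← PadicInt.norm_le_pow_iff_mem_span_pow] at h
  rw [PadicInt.norm_int_le_pow_iff_dvd] at h
  exact_mod_cast h

lemma aux_span_mono {p : ℕ} [Fact p.Prime] {N j : ℕ} (hj : N ≤ j) :
    Ideal.span {(p : ℤ_[p]) ^ j} ≤ Ideal.span {(p : ℤ_[p]) ^ N} :=
  Ideal.span_singleton_le_span_singleton.2 (pow_dvd_pow _ hj)

lemma aux_pow_dvd_appr_sub_appr {p : ℕ} [Fact p.Prime] (x y : ℤ_[p]) (N m k : ℕ)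
    (hm : N ≤ m) (hk : N ≤ k) (hxy : x - y ∈ Ideal.span {(p : ℤ_[p]) ^ N}) :
    (p : ℤ) ^ N ∣ ((x.appr m : ℤ) - (y.appr k : ℤ)) := by
  apply aux_int_dvd_of_span
  have h1 := aux_span_mono (p := p) hm (PadicInt.appr_spec m x)
  have h2 := aux_span_mono (p := p) hk (PadicInt.appr_spec k y)
  have hmem : ((x.appr m : ℤ_[p]) - (y.appr k : ℤ_[p])) ∈ Ideal.span {(p : ℤ_[p]) ^ N} := by
    have : ((x.appr m : ℤ_[p]) - (y.appr k : ℤ_[p]))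
        = (x - y) - (x - x.appr m) + (y - y.appr k) := by ring
    rw [this]
    exact add_mem (sub_mem hxy h1) h2
  have hc : (((x.appr m : ℤ) - (y.appr k : ℤ) : ℤ) : ℤ_[p])
      = (x.appr m : ℤ_[p]) - (y.appr k : ℤ_[p]) := by push_cast; ring
  rw [hc]
  exact hmem

lemma aux_pow_dvd_appr_add {p : ℕ} [Fact p.Prime] (x y : ℤ_[p]) (k : ℕ) :
    (p : ℤ) ^ k ∣ (((x + y).appr k : ℤ) - (x.appr k : ℤ) - (y.appr k : ℤ)) := by
  apply aux_int_dvd_of_span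
  have h1 := PadicInt.appr_spec k (x + y)
  have h2 := PadicInt.appr_spec k x
  have h3 := PadicInt.appr_spec k y
  have hmem : (((x + y).appr k : ℤ_[p]) - (x.appr k : ℤ_[p]) - (y.appr k : ℤ_[p]))
      ∈ Ideal.span {(p : ℤ_[p]) ^ k} := by
    have : (((x + y).appr k : ℤ_[p]) - (x.appr k : ℤ_[p]) - (y.appr k : ℤ_[p]))
        = (x - x.appr k) + (y - y.appr k) - ((x + y) - (x + y).appr k) := by ring
    rw [this]
    exact sub_mem (add_mem h2 h3) h1
  have hc : ((((x + y).appr k : ℤ) - (x.appr k : ℤ) - (y.appr k : ℤ) : ℤ) : ℤ_[p])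
      = ((x + y).appr k : ℤ_[p]) - (x.appr k : ℤ_[p]) - (y.appr k : ℤ_[p]) := by
    push_cast; ring
  rw [hc]
  exact hmem

lemma aux_pow_dvd_appr_intCast {p : ℕ} [Fact p.Prime] (n : ℤ) (k : ℕ) :
    (p : ℤ) ^ k ∣ ((((n : ℤ_[p]).appr k : ℤ)) - n) := by
  apply aux_int_dvd_of_span
  have h1 := PadicInt.appr_spec k ((n : ℤ_[p]))
  have hmem : (((n : ℤ_[p]).appr k : ℤ_[p]) - (n : ℤ_[p])) ∈ Ideal.span {(p : ℤ_[p]) ^ k} := by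
    have : (((n : ℤ_[p]).appr k : ℤ_[p]) - (n : ℤ_[p]))
        = -((n : ℤ_[p]) - ((n : ℤ_[p]).appr k)) := by ring
    rw [this]
    exact neg_mem h1
  have hc : (((((n : ℤ_[p]).appr k : ℤ)) - n : ℤ) : ℤ_[p])
      = ((n : ℤ_[p]).appr k : ℤ_[p]) - (n : ℤ_[p]) := by push_cast; ring
  rw [hc]
  exact hmem

/-- If `G` is a Hausdorff locally profinite topological group (with a neighborhood basis of
the identity consisting of profinite open subgroups), `ℓ` is a prime, and `g^(ℓ^k) → 1`,
then `ℤ → G`, `1 ↦ g`, extends to a continuous homomorphism `ẑ → G`. -/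
theorem extendsToZHat_of_tendsto_pow_prime
    {G : Type*} [Group G] [TopologicalSpace G] [IsTopologicalGroup G] [T2Space G]
    (hbasis : ∀ V ∈ 𝓝 (1 : G), ∃ U : Subgroup G, IsOpen (U : Set G) ∧ IsCompact (U : Set G) ∧
      IsTotallyDisconnected (U : Set G) ∧ (U : Set G) ⊆ V)
    (ℓ : ℕ) (hℓ : ℓ.Prime) (g : G)
    (hg : Tendsto (fun k : ℕ => g ^ ℓ ^ k) atTop (𝓝 (1 : G))) :
    ExtendsToZHat g := by
  haveI : Fact ℓ.Prime := ⟨hℓ⟩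
  set q : Nat.Primes := ⟨ℓ, hℓ⟩ with hq
  -- Key uniformity: powers of `g` with exponents divisible by high powers of `ℓ` are small.
  have hkey : ∀ V ∈ 𝓝 (1 : G), ∃ U : Subgroup G, IsOpen (U : Set G) ∧ IsCompact (U : Set G) ∧
      (U : Set G) ⊆ V ∧ ∃ N : ℕ, ∀ d : ℤ, (ℓ : ℤ) ^ N ∣ d → g ^ d ∈ U := by
    intro V hV
    obtain ⟨U, hUo, hUc, -, hUV⟩ := hbasis V hV
    have hU1 : (U : Set G) ∈ 𝓝 (1 : G) := hUo.mem_nhds U.one_mem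
    obtain ⟨N, hN⟩ := (hg.eventually_mem hU1).exists
    refine ⟨U, hUo, hUc, hUV, N, ?_⟩
    rintro d ⟨m, rfl⟩
    have : g ^ ((ℓ : ℤ) ^ N * m) = (g ^ (ℓ ^ N)) ^ m := by
      rw [← zpow_natCast g (ℓ ^ N), ← zpow_mul]
      push_cast
      ring_nf
    rw [this]
    exact U.zpow_mem hN m
  -- The approximating sequence.
  set u : ℤ_[ℓ] → ℕ → G := fun x k => g ^ ((x.appr k : ℤ)) with hu
  -- Cauchy-type estimate.
  have hCau : ∀ (x y : ℤ_[ℓ]) (S : Subgroup G) (N : ℕ),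
      (∀ d : ℤ, (ℓ : ℤ) ^ N ∣ d → g ^ d ∈ S) →
      (x - y ∈ Ideal.span {(ℓ : ℤ_[ℓ]) ^ N}) →
      ∀ m k, N ≤ m → N ≤ k → (u y m)⁻¹ * u x k ∈ S := by
    intro x y S N hS hxy m k hm hk
    have : (u y m)⁻¹ * u x k = g ^ ((x.appr k : ℤ) - (y.appr m : ℤ)) := by
      simp only [hu]
      rw [← zpow_neg, ← zpow_add, sub_eq_neg_add]
    rw [this]
    exact hS _ (aux_pow_dvd_appr_sub_appr x y N k m hk hm hxy)
  -- Convergence of the approximating sequence.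
  have hconv : ∀ x : ℤ_[ℓ], ∃ L : G, Tendsto (u x) atTop (𝓝 L) := by
    intro x
    obtain ⟨U, hUo, hUc, -, N0, hN0⟩ := hkey Set.univ univ_mem
    -- tail is contained in a compact set
    have htail : ∀ k, N0 ≤ k → u x k ∈ (fun h => u x N0 * h) '' (U : Set G) := by
      intro k hk
      refine ⟨(u x N0)⁻¹ * u x k, ?_, by group⟩
      exact hCau x x U N0 hN0 (by simp) N0 k le_rfl hk
    have hKc : IsCompact ((fun h => u x N0 * h) '' (U : Set G)) :=
      hUc.image (continuous_mul_left _)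
    have hle : map (fun n => u x (N0 + n)) atTop ≤ 𝓟 ((fun h => u x N0 * h) '' (U : Set G)) := by
      rw [le_principal_iff, mem_map]
      exact Eventually.of_forall fun n => htail _ (Nat.le_add_right _ _)
    obtain ⟨L, -, hL⟩ := hKc.exists_clusterPt hle
    refine ⟨L, ?_⟩
    rw [tendsto_def]
    intro V hV
    -- find a compact open subgroup W with L * W ⊆ V
    have hpre : (fun h => L * h) ⁻¹' V ∈ 𝓝 (1 : G) := by
      have : ContinuousAt (fun h => L * h) (1 : G) := (continuous_mul_left L).continuousAt
      apply this
      simpa using hV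
    obtain ⟨W, hWo, hWc, hWV, N1, hN1⟩ := hkey _ hpre
    -- pick a large index whose value is in L * W
    have hLW : {y | (L : G)⁻¹ * y ∈ (W : Set G)} ∈ 𝓝 L := by
      have : IsOpen {y | (L : G)⁻¹ * y ∈ (W : Set G)} :=
        hWo.preimage (continuous_mul_left L⁻¹)
      exact this.mem_nhds (by simp [W.one_mem])
    have hVmem : {y | ∃ n, max N0 N1 ≤ n ∧ y = u x (N0 + n)} ∈ map (fun n => u x (N0 + n)) atTop := by
      rw [mem_map]
      filter_upwards [eventually_ge_atTop (max N0 N1)] with n hn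
      exact ⟨n, hn, rfl⟩
    obtain ⟨y, hy1, n, hn, rfl⟩ := clusterPt_iff_nonempty.1 hL hLW hVmem
    set m := N0 + n with hm
    have hn' : (L : G)⁻¹ * u x m ∈ (W : Set G) := hy1
    have hmN1 : N1 ≤ m := le_trans (le_max_right _ _) (le_trans hn (Nat.le_add_left _ _))
    rw [mem_atTop_sets]
    refine ⟨m, fun k hk => ?_⟩
    have hkN1 : N1 ≤ k := le_trans hmN1 hk
    have h1 : (u x m)⁻¹ * u x k ∈ W :=
      hCau x x W N1 hN1 (by simp) m k hmN1 hkN1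
    have h2 : (L : G)⁻¹ * u x m ∈ W := hn'
    have : (L : G)⁻¹ * u x k = ((L : G)⁻¹ * u x m) * ((u x m)⁻¹ * u x k) := by group
    have hmemW : (L : G)⁻¹ * u x k ∈ W := by rw [this]; exact W.mul_mem h2 h1
    have : u x k = L * ((L : G)⁻¹ * u x k) := by group
    rw [Set.mem_preimage]
    rw [this]
    exact hWV hmemW
  choose φ hφ using hconv
  -- tendsto-to-one helper
  have hone : ∀ (c : ℕ → ℤ), (∀ N : ℕ, ∀ᶠ k in atTop, (ℓ : ℤ) ^ N ∣ c k) →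
      Tendsto (fun k => g ^ (c k)) atTop (𝓝 (1 : G)) := by
    intro c hc
    rw [tendsto_def]
    intro V hV
    obtain ⟨U, -, -, hUV, N, hN⟩ := hkey V hV
    filter_upwards [hc N] with k hk
    exact hUV (hN _ hk)
  -- continuity of φ
  have hWclosed : ∀ (x : ℤ_[ℓ]) (y : ℤ_[ℓ]) (W : Subgroup G) (N : ℕ),
      IsCompact (W : Set G) → (∀ d : ℤ, (ℓ : ℤ) ^ N ∣ d → g ^ d ∈ W) →
      (y - x ∈ Ideal.span {(ℓ : ℤ_[ℓ]) ^ N}) → (φ x)⁻¹ * φ y ∈ (W : Set G) := by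
    intro x y W N hWc hN hyx
    have hclosed : IsClosed (W : Set G) := hWc.isClosed
    have htend : Tendsto (fun k => (u x k)⁻¹ * u y k) atTop (𝓝 ((φ x)⁻¹ * φ y)) :=
      ((hφ x).inv).mul (hφ y)
    refine hclosed.mem_of_tendsto htend ?_
    filter_upwards [eventually_ge_atTop N] with k hk
    exact hCau y x W N hN hyx k k hk hk
  have hcont : Continuous φ := by
    rw [continuous_iff_continuousAt]
    intro x
    rw [ContinuousAt, tendsto_def]
    intro V hV
    have hpre : (fun h => φ x * h) ⁻¹' V ∈ 𝓝 (1 : G) := by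
      have : ContinuousAt (fun h => φ x * h) (1 : G) := (continuous_mul_left _).continuousAt
      apply this
      simpa using hV
    obtain ⟨W, hWo, hWc, hWV, N, hN⟩ := hkey _ hpre
    have hball : Metric.ball x ((ℓ : ℝ) ^ (-(N : ℤ))) ∈ 𝓝 x :=
      Metric.ball_mem_nhds x (zpow_pos (by exact_mod_cast hℓ.pos) _)
    refine mem_of_superset hball ?_
    intro y hy
    have hyx : y - x ∈ Ideal.span {(ℓ : ℤ_[ℓ]) ^ N} := by
      rw [← PadicInt.norm_le_pow_iff_mem_span_pow]
      have : dist y x < (ℓ : ℝ) ^ (-(N : ℤ)) := hy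
      rw [dist_eq_norm] at this
      exact le_of_lt this
    have hmemW := hWclosed x y W N hWc hN hyx
    have : φ y = φ x * ((φ x)⁻¹ * φ y) := by group
    rw [Set.mem_preimage, this]
    exact hWV hmemW
  -- Assemble
  refine ⟨fun z => φ (z q), hcont.comp (continuous_apply q), ?_, ?_⟩
  · intro a b
    show φ (a q + b q) = φ (a q) * φ (b q)
    set x := a q
    set y := b q
    have h1 : Tendsto (fun k => u x k * u y k *
        g ^ (((x + y).appr k : ℤ) - (x.appr k : ℤ) - (y.appr k : ℤ))) atTop
        (𝓝 (φ x * φ y * 1)) := by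
      refine Tendsto.mul ((hφ x).mul (hφ y)) ?_
      apply hone
      intro N
      filter_upwards [eventually_ge_atTop N] with k hk
      exact dvd_trans (pow_dvd_pow _ hk) (aux_pow_dvd_appr_add x y k)
    have h2 : (fun k => u x k * u y k *
        g ^ (((x + y).appr k : ℤ) - (x.appr k : ℤ) - (y.appr k : ℤ))) = u (x + y) := by
      funext k
      simp only [hu]
      rw [← zpow_add, ← zpow_add]
      ring_nf
    rw [h2] at h1
    rw [mul_one] at h1
    exact tendsto_nhds_unique (hφ (x + y)) h1
  · intro n
    show φ ((n : ℤ_[ℓ])) = g ^ n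
    have h1 : Tendsto (fun k => g ^ n *
        g ^ ((((n : ℤ_[ℓ]).appr k : ℤ)) - n)) atTop (𝓝 (g ^ n * 1)) := by
      refine Tendsto.mul tendsto_const_nhds ?_
      apply hone
      intro N
      filter_upwards [eventually_ge_atTop N] with k hk
      exact dvd_trans (pow_dvd_pow _ hk) (aux_pow_dvd_appr_intCast n k)
    have h2 : (fun k => g ^ n * g ^ ((((n : ℤ_[ℓ]).appr k : ℤ)) - n)) = u ((n : ℤ_[ℓ])) := by
      funext k
      simp only [hu]
      rw [← zpow_add]
      ring_nf
    rw [h2, mul_one] at h1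
    exact tendsto_nhds_unique (hφ _) h1
end

section
/- Let G be a Hausdorff locally profinite topological group, g ∈ G, and m a positive integer. Then the homomorphism ℤ → G, 1 ↦ g, extends to a continuous homomorphism ẑ → G if and only if the homomorphism ℤ → G, 1 ↦ g^m, extends to a continuous homomorphism ẑ → G. -/
open Filter Topology

section padic
variable {p : ℕ} [Fact p.Prime]

lemma aux_isUnit_natCast {u : ℕ} (h : ¬ p ∣ u) : IsUnit (u : ℤ_[p]) := by
  rw [PadicInt.isUnit_iff]
  refine le_antisymm (PadicInt.norm_le_one _) ?_
  by_contra hlt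
  push_neg at hlt
  have h2 : ‖((u : ℤ) : ℤ_[p])‖ < 1 := by
    simpa using hlt
  rw [PadicInt.norm_int_lt_one_iff_dvd] at h2
  exact h (by exact_mod_cast h2)

/-- If `p^N ∣ z` then `N ∣ z` in `ℤ_p`. -/
lemma aux_natCast_dvd_of_pow_dvd {N : ℕ} (hN : N ≠ 0) {z : ℤ_[p]}
    (h : (p : ℤ_[p]) ^ N ∣ z) : (N : ℤ_[p]) ∣ z := by
  have hfac : (N : ℤ_[p]) = (p : ℤ_[p]) ^ (N.factorization p) * (ordCompl[p] N : ℕ) := by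
    rw [← Nat.cast_pow, ← Nat.cast_mul, Nat.ordProj_mul_ordCompl_eq_self]
  rw [hfac, (aux_isUnit_natCast (Nat.not_dvd_ordCompl (Fact.out : p.Prime) hN)).mul_right_dvd]
  exact dvd_trans (pow_dvd_pow _ (le_of_lt (Nat.factorization_lt p hN))) h

/-- If `N ∣ z` in `ℤ_p` for an integer `z`, then `p ^ (v_p N) ∣ z` in `ℤ`. -/
lemma aux_pow_dvd_int_of_natCast_dvd {N : ℕ} {z : ℤ}
    (h : (N : ℤ_[p]) ∣ (z : ℤ_[p])) : (p ^ (N.factorization p) : ℤ) ∣ z := by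
  rw [← PadicInt.pow_p_dvd_int_iff]
  exact dvd_trans (by exact_mod_cast (Nat.cast_dvd_cast (Nat.ordProj_dvd N p) :
    ((p ^ (N.factorization p) : ℕ) : ℤ_[p]) ∣ (N : ℤ_[p]))) h

end padic

/-- CRT over a finset of primes. -/
lemma aux_crt (S : Finset Nat.Primes) (f : Nat.Primes → ℕ) (e : ℕ) :
    ∃ n : ℕ, ∀ ℓ ∈ S, n ≡ f ℓ [MOD ℓ.1 ^ e] := by
  classical
  induction S using Finset.induction with
  | empty => exact ⟨0, by simp⟩
  | insert q S hq ih =>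
    obtain ⟨n₁, hn₁⟩ := ih
    have hco : Nat.Coprime (q.1 ^ e) (∏ ℓ ∈ S, ℓ.1 ^ e) := by
      exact Nat.Coprime.prod_right fun ℓ hℓ => Nat.Coprime.pow _ _
        ((Nat.coprime_primes q.2 ℓ.2).2 fun h => hq
          (by rw [show q = ℓ from Subtype.ext h]; exact hℓ))
    obtain ⟨n, hn⟩ := Nat.chineseRemainder hco (f q) n₁
    refine ⟨n, fun ℓ hℓ => ?_⟩
    rcases Finset.mem_insert.1 hℓ with rfl | hℓS
    · exact hn.1
    · refine Nat.ModEq.trans (Nat.ModEq.of_dvd ?_ hn.2) (hn₁ ℓ hℓS)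
      exact Finset.dvd_prod_of_mem _ hℓS

/-- Simultaneous approximation of an element of `ẑ` by a natural number. -/
lemma aux_approx (x : ZHat) (N : ℕ) (hN : N ≠ 0) :
    ∃ n : ℕ, ∀ ℓ : Nat.Primes, (N : ℤ_[ℓ.1]) ∣ (x ℓ - n) := by
  classical
  set S : Finset Nat.Primes :=
    N.primeFactors.attach.image fun p => (⟨p.1, Nat.prime_of_mem_primeFactors p.2⟩ : Nat.Primes) with hS
  obtain ⟨n, hn⟩ := aux_crt S (fun ℓ => (x ℓ).appr N) N
  refine ⟨n, fun ℓ => ?_⟩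
  by_cases hdvd : ℓ.1 ∣ N
  · have hmem : ℓ ∈ S := by
      rw [hS]; apply Finset.mem_image.2
      exact ⟨⟨ℓ.1, Nat.mem_primeFactors.2 ⟨ℓ.2, hdvd, hN⟩⟩, Finset.mem_attach _ _, Subtype.ext rfl⟩
    apply aux_natCast_dvd_of_pow_dvd hN
    have h1 : (ℓ.1 : ℤ_[ℓ.1]) ^ N ∣ (x ℓ - (x ℓ).appr N) :=
      Ideal.mem_span_singleton.1 ((x ℓ).appr_spec N)
    have h2 : ((ℓ.1 : ℤ) ^ N) ∣ ((x ℓ).appr N : ℤ) - (n : ℤ) := by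
      have := (hn ℓ hmem).dvd
      exact_mod_cast this
    have h3 : (ℓ.1 : ℤ_[ℓ.1]) ^ N ∣ (((x ℓ).appr N : ℤ_[ℓ.1]) - n) := by
      have := map_dvd (Int.castRingHom ℤ_[ℓ.1]) h2
      push_cast at this ⊢
      exact_mod_cast this
    have := dvd_add h1 h3
    simpa using this
  · exact (aux_isUnit_natCast hdvd).dvd

/-- `ℤ` is dense in `ẑ`. -/
lemma aux_dense : Dense (Set.range zhatInt) := by
  classical
  intro x
  rw [mem_closure_iff_nhds]
  intro U hU
  rw [nhds_pi, Filter.mem_pi] at hU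
  obtain ⟨I, hIfin, t, htm, hsub⟩ := hU
  have hε : ∀ i : Nat.Primes, ∃ ε : ℝ, 0 < ε ∧ Metric.ball (x i) ε ⊆ t i := by
    intro i
    obtain ⟨ε, hε, hb⟩ := Metric.mem_nhds_iff.1 (htm i)
    exact ⟨ε, hε, hb⟩
  choose ε hεpos hball using hε
  have hk : ∀ i : Nat.Primes, ∃ k : ℕ, (i.1 : ℝ) ^ (-(k : ℤ)) < ε i := fun i =>
    PadicInt.exists_pow_neg_lt i.1 (hεpos i)
  choose k hk using hk
  set T := hIfin.toFinset with hT
  set N : ℕ := ∏ i ∈ T, i.1 ^ (k i) with hNdef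
  have hN : N ≠ 0 := Finset.prod_ne_zero_iff.2 fun i _ => pow_ne_zero _ i.2.pos.ne'
  obtain ⟨n, hn⟩ := aux_approx x N hN
  refine ⟨zhatInt n, hsub ?_, Set.mem_range_self _⟩
  intro i hi
  apply hball i
  rw [Metric.mem_ball, dist_eq_norm]
  have h1 : (i.1 : ℤ_[i.1]) ^ (k i) ∣ (x i - n) := by
    refine dvd_trans ?_ (hn i)
    have : (i.1 ^ (k i) : ℕ) ∣ N := Finset.dvd_prod_of_mem _ (hIfin.mem_toFinset.2 hi)
    exact_mod_cast Nat.cast_dvd_cast (α := ℤ_[i.1]) this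
  obtain ⟨c, hc⟩ := h1
  have h4 : zhatInt (n : ℤ) i - x i = -(x i - (n : ℕ)) := by simp [zhatInt]
  rw [h4, norm_neg, hc, norm_mul]
  calc ‖(i.1 : ℤ_[i.1]) ^ (k i)‖ * ‖c‖ ≤ ‖(i.1 : ℤ_[i.1]) ^ (k i)‖ * 1 := by
        exact mul_le_mul_of_nonneg_left (PadicInt.norm_le_one c) (norm_nonneg _)
    _ = (i.1 : ℝ) ^ (-(k i : ℤ)) := by rw [mul_one, PadicInt.norm_p_pow]
    _ < ε i := hk i

/-- An integer divisible by `N` in every `ℤ_ℓ` is divisible by `N` in `ℤ`. -/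
lemma aux_descent (N : ℕ) (hN : N ≠ 0) (z : ℤ)
    (h : ∀ ℓ : Nat.Primes, (N : ℤ_[ℓ.1]) ∣ ((z : ℤ) : ℤ_[ℓ.1])) : (N : ℤ) ∣ z := by
  rcases eq_or_ne z 0 with rfl | hz
  · exact dvd_zero _
  have hz' : z.natAbs ≠ 0 := fun h0 => hz (Int.natAbs_eq_zero.1 h0)
  have : N ∣ z.natAbs := by
    rw [← Nat.factorization_le_iff_dvd hN hz', Finsupp.le_def]
    intro p
    by_cases hp : p.Prime
    · haveI : Fact p.Prime := ⟨hp⟩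
      have h2 := aux_pow_dvd_int_of_natCast_dvd (p := p) (N := N) (h ⟨p, hp⟩)
      have h3 : (p ^ N.factorization p : ℕ) ∣ z.natAbs := by
        have h4 := Int.natAbs_dvd_natAbs.2 h2
        rwa [Int.natAbs_pow, Int.natAbs_natCast] at h4
      exact (Nat.Prime.pow_dvd_iff_le_factorization hp hz').1 h3
    · simp [Nat.factorization_eq_zero_of_not_prime _ hp]
  exact Int.dvd_natAbs.1 (Int.natCast_dvd_natCast.2 this)

section padic2
variable {p : ℕ} [Fact p.Prime]

lemma aux_dvd_iff_norm {M : ℕ} (hM : M ≠ 0) (z : ℤ_[p]) :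
    (M : ℤ_[p]) ∣ z ↔ ‖z‖ ≤ (p : ℝ) ^ (-(M.factorization p : ℤ)) := by
  have hfac : (M : ℤ_[p]) = (p : ℤ_[p]) ^ (M.factorization p) * (ordCompl[p] M : ℕ) := by
    rw [← Nat.cast_pow, ← Nat.cast_mul, Nat.ordProj_mul_ordCompl_eq_self]
  rw [hfac, (aux_isUnit_natCast (Nat.not_dvd_ordCompl (Fact.out : p.Prime) hM)).mul_right_dvd,
    ← Ideal.mem_span_singleton, ← PadicInt.norm_le_pow_iff_mem_span_pow]

lemma aux_isOpen_dvd {M : ℕ} (hM : M ≠ 0) : IsOpen {z : ℤ_[p] | (M : ℤ_[p]) ∣ z} := by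
  rw [Metric.isOpen_iff]
  intro z hz
  refine ⟨(p : ℝ) ^ (-(M.factorization p : ℤ)), zpow_pos (by exact_mod_cast (Fact.out : p.Prime).pos) _, fun w hw => ?_⟩
  rw [Metric.mem_ball, dist_eq_norm] at hw
  rw [Set.mem_setOf_eq, aux_dvd_iff_norm hM] at hz ⊢
  calc ‖w‖ = ‖(w - z) + z‖ := by ring_nf
    _ ≤ max ‖w - z‖ ‖z‖ := PadicInt.nonarchimedean _ _
    _ ≤ (p : ℝ) ^ (-(M.factorization p : ℤ)) := max_le hw.le hz

end padic2

section mul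
variable {m : ℕ} (hm : m ≠ 0)

lemma aux_mem_range_iff (x : ZHat) :
    x ∈ Set.range (fun y : ZHat => (m : ZHat) * y) ↔
      ∀ ℓ : Nat.Primes, (m : ℤ_[ℓ.1]) ∣ x ℓ := by
  constructor
  · rintro ⟨y, rfl⟩ ℓ
    exact ⟨y ℓ, rfl⟩
  · intro h
    choose c hc using h
    exact ⟨c, funext fun ℓ => (hc ℓ).symm⟩

include hm in
lemma aux_isOpen_range : IsOpen (Set.range fun y : ZHat => (m : ZHat) * y) := by
  have hrw : Set.range (fun y : ZHat => (m : ZHat) * y) =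
      Set.pi {ℓ : Nat.Primes | ℓ.1 ∣ m} (fun ℓ => {z : ℤ_[ℓ.1] | (m : ℤ_[ℓ.1]) ∣ z}) := by
    ext x
    rw [aux_mem_range_iff, Set.mem_pi]
    constructor
    · intro h ℓ _
      exact h ℓ
    · intro h ℓ
      by_cases hd : ℓ.1 ∣ m
      · exact h ℓ hd
      · exact (aux_isUnit_natCast hd).dvd
  rw [hrw]
  refine isOpen_set_pi ?_ fun ℓ _ => aux_isOpen_dvd hm
  have hsub : {ℓ : Nat.Primes | ℓ.1 ∣ m} ⊆ Subtype.val ⁻¹' {d : ℕ | d ∣ m} := fun ℓ h => h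
  refine Set.Finite.subset (Set.Finite.preimage (Set.injOn_of_injective Subtype.val_injective)
    (Set.Finite.subset (Set.finite_Iic m) fun d hd => Nat.le_of_dvd (Nat.pos_of_ne_zero hm) hd)) hsub

end mul

lemma aux_natCast_eq_zhatInt (r : ℕ) : ((r : ℕ) : ZHat) = zhatInt (r : ℤ) := by
  funext q
  simp [zhatInt]


/-- For a Hausdorff locally profinite topological group `G`, `g ∈ G` and `m` a positive
integer, `1 ↦ g` extends to a continuous homomorphism `ẑ → G` if and only if `1 ↦ g^m`
does. -/
theorem extendsToZHat_iff_extendsToZHat_pow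
    {G : Type*} [Group G] [TopologicalSpace G] [IsTopologicalGroup G] [T2Space G]
    (hbasis : ∀ V ∈ 𝓝 (1 : G), ∃ U : Subgroup G, IsOpen (U : Set G) ∧ IsCompact (U : Set G) ∧
      IsTotallyDisconnected (U : Set G) ∧ (U : Set G) ⊆ V)
    (m : ℕ) (hm : 0 < m) (g : G) :
    ExtendsToZHat g ↔ ExtendsToZHat (g ^ m) := by
  have hm' : m ≠ 0 := hm.ne'
  constructor
  · rintro ⟨F, hFc, hFadd, hFint⟩
    refine ⟨fun x => F ((m : ZHat) * x), hFc.comp (continuous_const.mul continuous_id),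
      fun x y => by show F ((m : ZHat) * (x + y)) = _; rw [mul_add, hFadd], fun n => ?_⟩
    show F ((m : ZHat) * zhatInt n) = (g ^ m) ^ n
    have h1 : (m : ZHat) * zhatInt n = zhatInt ((m : ℤ) * n) := by
      funext q
      simp [zhatInt]
    rw [h1, hFint, zpow_mul, zpow_natCast]
  · rintro ⟨F, hFc, hFadd, hFint⟩
    set φ : ZHat → ZHat := fun y => (m : ZHat) * y with hφ
    have hmne : ∀ q : Nat.Primes, ((m : ℕ) : ℤ_[q.1]) ≠ 0 := fun q => Nat.cast_ne_zero.2 hm'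
    have hφinj : Function.Injective φ := by
      intro a b hab
      funext q
      exact mul_left_cancel₀ (hmne q) (congrFun hab q)
    have hφcont : Continuous φ := continuous_const.mul continuous_id
    have hφemb : IsEmbedding φ := (hφcont.isClosedEmbedding hφinj).toIsEmbedding
    have hopen : IsOpen (Set.range φ) := aux_isOpen_range hm'
    set ψ : ZHat → ZHat := Function.invFun φ with hψdef
    have hψφ : ∀ y, ψ (φ y) = y := fun y => Function.leftInverse_invFun hφinj y
    have hφψ : ∀ x ∈ Set.range φ, φ (ψ x) = x := fun x hx => Function.invFun_eq hx
    have hψcont : ContinuousOn ψ (Set.range φ) := by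
      rw [continuousOn_iff_continuous_restrict]
      have hres : (Set.range φ).domRestrict ψ =
          fun y => (hφemb.toHomeomorph).symm y := by
        funext y
        have h1 : φ ((hφemb.toHomeomorph).symm y) = y.1 :=
          congrArg Subtype.val ((hφemb.toHomeomorph).apply_symm_apply y)
        calc (Set.range φ).domRestrict ψ y = ψ (φ ((hφemb.toHomeomorph).symm y)) := by
              rw [h1]; rfl
          _ = _ := hψφ _
      rw [hres]
      exact (hφemb.toHomeomorph).symm.continuous
    -- Key well-definedness lemmas
    have hW : ∀ (z : ℤ) (c : ZHat), φ c = zhatInt z → F c = g ^ z := by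
      intro z c hc
      have hdvd : ∀ ℓ : Nat.Primes, (m : ℤ_[ℓ.1]) ∣ ((z : ℤ) : ℤ_[ℓ.1]) :=
        fun ℓ => ⟨c ℓ, (congrFun hc ℓ).symm⟩
      obtain ⟨w, hw⟩ := aux_descent m hm' z hdvd
      have hc' : φ c = φ (zhatInt w) := by
        rw [hc]
        funext q
        simp only [hφ, zhatInt, hw, Pi.mul_apply, Pi.natCast_apply]
        push_cast
        ring
      rw [hφinj hc', hFint w, hw, zpow_mul, zpow_natCast]
    have hW2 : ∀ (z z' : ℤ) (a a' : ZHat), zhatInt z + φ a = zhatInt z' + φ a' →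
        g ^ z * F a = g ^ z' * F a' := by
      intro z z' a a' hE
      have h1 : φ (a - a') = zhatInt (z' - z) := by
        have h0 : zhatInt (z' - z) = zhatInt z' - zhatInt z := by
          funext q
          simp [zhatInt]
        rw [h0]
        simp only [hφ] at hE ⊢
        linear_combination hE
      have h3 : F (a - a' + a') = F (a - a') * F a' := hFadd _ _
      rw [sub_add_cancel] at h3
      rw [h3, hW _ _ h1, ← mul_assoc, ← zpow_add]
      congr 1
      ring
    -- g commutes with everything in the image of F
    have hcomm : ∀ a : ZHat, Commute g (F a) := by
      have hclosed : IsClosed {a : ZHat | g * F a = F a * g} :=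
        isClosed_eq (continuous_const.mul hFc) (hFc.mul continuous_const)
      have hsub : Set.range zhatInt ⊆ {a : ZHat | g * F a = F a * g} := by
        rintro _ ⟨n, rfl⟩
        show g * F (zhatInt n) = F (zhatInt n) * g
        rw [hFint]
        exact (((Commute.refl g).pow_right m).zpow_right n).eq
      intro a
      have h5 : (Set.univ : Set ZHat) ⊆ {a : ZHat | g * F a = F a * g} := by
        rw [← aux_dense.closure_eq]
        exact hclosed.closure_subset_iff.2 hsub
      exact h5 (Set.mem_univ a)
    -- residue decomposition
    have hres : ∀ x : ZHat, ∃ r : ℕ, r < m ∧ ∃ a : ZHat, x = ((r : ℕ) : ZHat) + φ a := by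
      intro x
      obtain ⟨n, hn⟩ := aux_approx x m hm'
      refine ⟨n % m, Nat.mod_lt _ hm, ?_⟩
      have hd : ∀ ℓ : Nat.Primes, (m : ℤ_[ℓ.1]) ∣ (x ℓ - ((n % m : ℕ) : ℤ_[ℓ.1])) := by
        intro ℓ
        have h0 : ((n % m : ℕ) : ℤ_[ℓ.1]) + ((m * (n / m) : ℕ) : ℤ_[ℓ.1]) = (n : ℤ_[ℓ.1]) := by
          rw [← Nat.cast_add, Nat.mod_add_div]
        have h1 : x ℓ - ((n % m : ℕ) : ℤ_[ℓ.1]) = (x ℓ - n) + ((m * (n / m) : ℕ) : ℤ_[ℓ.1]) := by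
          linear_combination -h0
        rw [h1]
        exact dvd_add (hn ℓ) ⟨((n / m : ℕ) : ℤ_[ℓ.1]), by push_cast; ring⟩
      obtain ⟨a, ha⟩ := (aux_mem_range_iff (x - ((n % m : ℕ) : ZHat))).2 (fun ℓ => hd ℓ)
      exact ⟨a, by rw [hφ]; linear_combination -ha⟩
    choose r hrm a ha using hres
    refine ⟨fun x => g ^ (r x) * F (a x), ?_, ?_, ?_⟩
    · -- continuity
      rw [continuous_iff_continuousAt]
      intro x₀
      have hx₀U : x₀ - ((r x₀ : ℕ) : ZHat) ∈ Set.range φ := ⟨a x₀, by linear_combination -(ha x₀)⟩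
      have hUopen : IsOpen ((fun x : ZHat => x - ((r x₀ : ℕ) : ZHat)) ⁻¹' Set.range φ) :=
        hopen.preimage (continuous_id.sub continuous_const)
      have hGc : ContinuousAt (fun x => g ^ (r x₀) * F (ψ (x - ((r x₀ : ℕ) : ZHat)))) x₀ := by
        have hc1 : ContinuousAt (fun x : ZHat => x - ((r x₀ : ℕ) : ZHat)) x₀ :=
          (continuous_id.sub continuous_const).continuousAt
        have hc2 : ContinuousAt ψ (x₀ - ((r x₀ : ℕ) : ZHat)) :=
          hψcont.continuousAt (hopen.mem_nhds hx₀U)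
        have hc3 : ContinuousAt (fun x : ZHat => ψ (x - ((r x₀ : ℕ) : ZHat))) x₀ :=
          ContinuousAt.comp (g := ψ) (f := fun x : ZHat => x - ((r x₀ : ℕ) : ZHat)) hc2 hc1
        exact continuousAt_const.mul (hFc.continuousAt.comp hc3)
      refine ContinuousAt.congr hGc ?_
      refine Filter.eventuallyEq_of_mem (hUopen.mem_nhds hx₀U) fun x hx => ?_
      have h1 : φ (ψ (x - ((r x₀ : ℕ) : ZHat))) = x - ((r x₀ : ℕ) : ZHat) := hφψ _ hx
      have hE : zhatInt ((r x₀ : ℕ) : ℤ) + φ (ψ (x - ((r x₀ : ℕ) : ZHat))) =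
          zhatInt ((r x : ℕ) : ℤ) + φ (a x) := by
        rw [h1, ← aux_natCast_eq_zhatInt, ← aux_natCast_eq_zhatInt]
        linear_combination ha x
      have hkey := hW2 _ _ _ _ hE
      rw [zpow_natCast, zpow_natCast] at hkey
      exact hkey
    · -- homomorphism
      intro x y
      have hE : zhatInt ((r (x + y) : ℕ) : ℤ) + φ (a (x + y)) =
          zhatInt (((r x + r y : ℕ)) : ℤ) + φ (a x + a y) := by
        rw [← aux_natCast_eq_zhatInt, ← aux_natCast_eq_zhatInt]
        have h1 := ha (x + y)
        have h2 := ha x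
        have h3 := ha y
        simp only [hφ] at h1 h2 h3 ⊢
        push_cast
        linear_combination h2 + h3 - h1
      have hkey := hW2 _ _ _ _ hE
      rw [zpow_natCast, zpow_natCast] at hkey
      show g ^ r (x + y) * F (a (x + y)) = (g ^ r x * F (a x)) * (g ^ r y * F (a y))
      rw [hkey, hFadd, pow_add]
      have hc := ((hcomm (a x)).pow_left (r y)).eq
      rw [mul_assoc (g ^ r x), ← mul_assoc (g ^ r y), hc, mul_assoc (F (a x)), ← mul_assoc]
    · -- integers
      intro n
      have hE : zhatInt ((r (zhatInt n) : ℕ) : ℤ) + φ (a (zhatInt n)) =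
          zhatInt (n % m) + φ (zhatInt (n / m)) := by
        rw [← aux_natCast_eq_zhatInt]
        have h1 := ha (zhatInt n)
        have h2 : zhatInt (n % m) + φ (zhatInt (n / m)) = zhatInt n := by
          have hsum : zhatInt (n % m) + zhatInt ((m : ℤ) * (n / m)) = zhatInt n := by
            funext q
            simp only [zhatInt, Pi.add_apply]
            rw [← Int.cast_add, Int.emod_add_mul_ediv]
          rw [← hsum]
          congr 1
          funext q
          simp only [hφ, zhatInt, Pi.mul_apply, Pi.natCast_apply]
          push_cast
          ring
        rw [h2]
        exact h1.symm
      have hkey := hW2 _ _ _ _ hE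
      rw [zpow_natCast, hFint] at hkey
      show g ^ r (zhatInt n) * F (a (zhatInt n)) = g ^ n
      rw [hkey, ← zpow_natCast g m, ← zpow_mul, ← zpow_add]
      congr 1
      exact Int.emod_add_mul_ediv n m
end
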